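/- (Proposition 1) Let {C_α}_{α∈ℕ} be a countable family of nonempty, bounded, open subsets of ℝ³ that are pairwise disjoint, whose closures cover ℝ³, and such that every compact set K ⊆ ℝ³ is contained in the union of finitely many of the closures cl(C_α). Let B : [0,∞) × [0,∞) → [0,∞) be measurable. Then for every pair of indices (β, γ), the set {α ∈ ℕ : G_{α;β,γ} ≠ 0} is finite. -/

import Mathlib

open MeasureTheory Real ENNReal

noncomputable section

abbrev V3 := EuclideanSpace ℝ (Fin 3)

/-- The unit vector u(s,θ) = (√(1−s²)cos θ, √(1−s²)sin θ, s). -/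
def uvec (s θ : ℝ) : V3 :=
  (WithLp.equiv 2 (Fin 3 → ℝ)).symm
    ![Real.sqrt (1 - s ^ 2) * Real.cos θ, Real.sqrt (1 - s ^ 2) * Real.sin θ, s]


lemma norm_uvec {s : ℝ} (θ : ℝ) (hs : s ∈ Set.Icc (-1:ℝ) 1) : ‖uvec s θ‖ = 1 := by
  have h1 : (0:ℝ) ≤ 1 - s^2 := by nlinarith [hs.1, hs.2]
  have hsq := Real.sq_sqrt h1
  have htrig := Real.sin_sq_add_cos_sq θ
  rw [EuclideanSpace.norm_eq]
  simp only [uvec, WithLp.equiv_symm_apply, PiLp.toLp_apply, Fin.sum_univ_three, Matrix.cons_val_zero,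
    Matrix.cons_val_one, Matrix.head_cons, Matrix.cons_val_two, Matrix.tail_cons,
    Real.norm_eq_abs, sq_abs]
  have : (Real.sqrt (1 - s ^ 2) * Real.cos θ) ^ 2 + (Real.sqrt (1 - s ^ 2) * Real.sin θ) ^ 2
      + s ^ 2 = 1 := by nlinarith
  rw [this, Real.sqrt_one]

lemma norm_pt (ξ ξs : V3) {s : ℝ} (θ : ℝ) (hs : s ∈ Set.Icc (-1:ℝ) 1) :
    ‖(1 / 2 : ℝ) • (ξ + ξs) + ((1 / 2) * ‖ξ - ξs‖) • uvec s θ‖ ≤ ‖ξ‖ + ‖ξs‖ ∧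
    ‖(1 / 2 : ℝ) • (ξ + ξs) - ((1 / 2) * ‖ξ - ξs‖) • uvec s θ‖ ≤ ‖ξ‖ + ‖ξs‖ := by
  have h1 : ‖(1 / 2 : ℝ) • (ξ + ξs)‖ ≤ (‖ξ‖ + ‖ξs‖) / 2 := by
    rw [norm_smul]
    have := norm_add_le ξ ξs
    simp only [Real.norm_eq_abs]
    rw [abs_of_nonneg (by norm_num : (0:ℝ) ≤ 1/2)]
    linarith
  have h2 : ‖((1 / 2) * ‖ξ - ξs‖) • uvec s θ‖ ≤ (‖ξ‖ + ‖ξs‖) / 2 := by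
    rw [norm_smul, norm_uvec θ hs, mul_one]
    have := norm_sub_le ξ ξs
    simp only [Real.norm_eq_abs]
    rw [abs_of_nonneg (by positivity)]
    linarith
  constructor
  · calc _ ≤ _ := norm_add_le _ _
      _ ≤ _ := by linarith
  · calc _ ≤ _ := norm_sub_le _ _
      _ ≤ _ := by linarith

/-- The gain kernel G(φ; ξ, ξ*) for a nonnegative test function φ,
with values in [0,∞]. -/
def gainK (B : ℝ → ℝ → ℝ) (φ : V3 → ℝ) (ξ ξs : V3) : ℝ≥0∞ :=
  ENNReal.ofReal (‖ξ - ξs‖ / 8) *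
    ∫⁻ s in Set.Icc (-1 : ℝ) 1, ∫⁻ θ in Set.Icc (-π) π,
      ENNReal.ofReal (B ((1 / 2) * ‖(ξ - ξs) - ‖ξ - ξs‖ • uvec s θ‖) ‖ξ - ξs‖) *
        (ENNReal.ofReal (φ ((1 / 2 : ℝ) • (ξ + ξs) + ((1 / 2) * ‖ξ - ξs‖) • uvec s θ)) +
         ENNReal.ofReal (φ ((1 / 2 : ℝ) • (ξ + ξs) - ((1 / 2) * ‖ξ - ξs‖) • uvec s θ)))

/-- The coefficient G_{α;β,γ}: the average of G(χ_α; ·, ·) over C_β × C_γ. -/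
def Gcoef (B : ℝ → ℝ → ℝ) (Cα Cβ Cγ : Set V3) : ℝ≥0∞ :=
  (volume Cβ)⁻¹ * (volume Cγ)⁻¹ *
    ∫⁻ ξ in Cβ, ∫⁻ ξs in Cγ, gainK B (Cα.indicator fun _ => 1) ξ ξs

/-- **(Proposition 1)** For a partition of ℝ³ into countably many nonempty bounded open
cells whose closures cover ℝ³, such that every compact set is covered by finitely many
cell closures, and for any measurable nonnegative collision kernel B, the coefficients
G_{α;β,γ} vanish for all but finitely many α, for each fixed pair (β,γ). -/
theorem Gcoef_finitely_many_nonzero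
    (C : ℕ → Set V3)
    (hne : ∀ α, (C α).Nonempty)
    (hbd : ∀ α, Bornology.IsBounded (C α))
    (hop : ∀ α, IsOpen (C α))
    (hdisj : Pairwise (Function.onFun Disjoint C))
    (hcover : ⋃ α, closure (C α) = Set.univ)
    (hcpt : ∀ K : Set V3, IsCompact K → ∃ S : Finset ℕ, K ⊆ ⋃ α ∈ S, closure (C α))
    (B : ℝ → ℝ → ℝ) (hB : Measurable (Function.uncurry B)) (hBnn : ∀ x y, 0 ≤ B x y)
    (β γ : ℕ) :
    {α : ℕ | Gcoef B (C α) (C β) (C γ) ≠ 0}.Finite := by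
  
  obtain ⟨Rβ, hRβ⟩ := (hbd β).subset_closedBall (0 : V3)
  obtain ⟨Rγ, hRγ⟩ := (hbd γ).subset_closedBall (0 : V3)
  set K : Set V3 := Metric.closedBall 0 (Rβ + Rγ) with hK
  obtain ⟨S, hS⟩ := hcpt K (isCompact_closedBall _ _)
  apply Set.Finite.subset S.finite_toSet
  intro α hα
  by_contra hαS
  apply hα
  have hdK : ∀ p ∈ K, p ∉ C α := by
    intro p hpK hpα
    obtain ⟨α', hα'S, hpα'⟩ := Set.mem_iUnion₂.mp (hS hpK)
    rcases eq_or_ne α α' with rfl | hne'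
    · exact hαS hα'S
    · exact Set.disjoint_left.mp ((hdisj hne').closure_right (hop α)) hpα hpα'
  have hzero : ∀ ξ ∈ C β, ∀ ξs ∈ C γ,
      gainK B ((C α).indicator fun _ => 1) ξ ξs = 0 := by
    intro ξ hξ ξs hξs
    have hξn : ‖ξ‖ ≤ Rβ := by simpa using hRβ hξ
    have hξsn : ‖ξs‖ ≤ Rγ := by simpa using hRγ hξs
    have hinner : (∫⁻ s in Set.Icc (-1 : ℝ) 1, ∫⁻ θ in Set.Icc (-π) π,
        ENNReal.ofReal (B ((1 / 2) * ‖(ξ - ξs) - ‖ξ - ξs‖ • uvec s θ‖) ‖ξ - ξs‖) *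
        (ENNReal.ofReal (((C α).indicator fun _ => (1:ℝ))
            ((1 / 2 : ℝ) • (ξ + ξs) + ((1 / 2) * ‖ξ - ξs‖) • uvec s θ)) +
         ENNReal.ofReal (((C α).indicator fun _ => (1:ℝ))
            ((1 / 2 : ℝ) • (ξ + ξs) - ((1 / 2) * ‖ξ - ξs‖) • uvec s θ)))) = 0 := by
      refine le_antisymm ?_ zero_le
      have : (0:ℝ≥0∞) = ∫⁻ _ in Set.Icc (-1 : ℝ) 1, (0:ℝ≥0∞) := by simp
      rw [this]
      refine setLIntegral_mono' measurableSet_Icc ?_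
      intro s hs
      have hF : ∀ θ : ℝ,
          ENNReal.ofReal (B ((1 / 2) * ‖(ξ - ξs) - ‖ξ - ξs‖ • uvec s θ‖) ‖ξ - ξs‖) *
          (ENNReal.ofReal (((C α).indicator fun _ => (1:ℝ))
              ((1 / 2 : ℝ) • (ξ + ξs) + ((1 / 2) * ‖ξ - ξs‖) • uvec s θ)) +
           ENNReal.ofReal (((C α).indicator fun _ => (1:ℝ))
              ((1 / 2 : ℝ) • (ξ + ξs) - ((1 / 2) * ‖ξ - ξs‖) • uvec s θ))) = 0 := by
        intro θ
        obtain ⟨hb1, hb2⟩ := norm_pt ξ ξs θ hs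
        have hm1 : ((1 / 2 : ℝ) • (ξ + ξs) + ((1 / 2) * ‖ξ - ξs‖) • uvec s θ) ∈ K := by
          rw [hK, Metric.mem_closedBall, dist_zero_right]; linarith
        have hm2 : ((1 / 2 : ℝ) • (ξ + ξs) - ((1 / 2) * ‖ξ - ξs‖) • uvec s θ) ∈ K := by
          rw [hK, Metric.mem_closedBall, dist_zero_right]; linarith
        rw [Set.indicator_of_notMem (hdK _ hm1), Set.indicator_of_notMem (hdK _ hm2)]
        simp
      simp only [hF]
      simp
    rw [gainK, hinner, mul_zero]
  have hmid : (∫⁻ ξ in C β, ∫⁻ ξs in C γ,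
      gainK B ((C α).indicator fun _ => 1) ξ ξs) = 0 := by
    refine le_antisymm ?_ zero_le
    have h0 : (0:ℝ≥0∞) = ∫⁻ _ in C β, (0:ℝ≥0∞) := by simp
    rw [h0]
    refine setLIntegral_mono' (hop β).measurableSet ?_
    intro ξ hξ
    calc (∫⁻ ξs in C γ, gainK B ((C α).indicator fun _ => 1) ξ ξs)
        ≤ ∫⁻ _ in C γ, (0:ℝ≥0∞) :=
          setLIntegral_mono' (hop γ).measurableSet (fun ξs hξs => le_of_eq (hzero ξ hξ ξs hξs))
      _ = 0 := by simp
  rw [Gcoef, hmid, mul_zero]
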